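/- There exist constants c > 0 and n₀ such that for every n ≥ n₀, if f : [n] → [n] is chosen uniformly at random, then with probability at least 1 − e^{−c·n} the function f differs from every permutation of [n] on at least n/8 values; equivalently, the number of functions f : [n] → [n] for which there exists a permutation σ of [n] with |{i ∈ [n] : f(i) ≠ σ(i)}| < n/8 is at most e^{−c·n} · n^n. -/

import Mathlib

open Finset Real


open Finset

-- choose is monotone below the middle
lemma chooseMono {n s m : ℕ} (hsm : s ≤ m) (h2 : 2 * m ≤ n) :
    n.choose s ≤ n.choose m := by
  induction m with
  | zero => simp [Nat.le_zero.mp hsm]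
  | succ k ih =>
    rcases Nat.lt_succ_iff_lt_or_eq.mp (Nat.lt_succ_of_le hsm) with h | h
    · have hk : n.choose s ≤ n.choose k := ih (Nat.lt_succ_iff.mp h) (by omega)
      have : n.choose k ≤ n.choose (k+1) :=
        Nat.choose_le_succ_of_lt_half_left (by omega)
      omega
    · subst h; rfl

-- monotonicity of the fiber bound
lemma fiberMono {n s m : ℕ} (hsm : s ≤ m) (hmn : m ≤ n) :
    n ^ s * n.descFactorial (n - s) ≤ n ^ m * n.descFactorial (n - m) := by
  induction m with
  | zero => simp_all [Nat.le_zero.mp hsm]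
  | succ k ih =>
    rcases Nat.lt_succ_iff_lt_or_eq.mp (Nat.lt_succ_of_le hsm) with h | h
    · have h1 : n ^ s * n.descFactorial (n - s) ≤ n ^ k * n.descFactorial (n - k) :=
        ih (Nat.lt_succ_iff.mp h) (by omega)
      have key : n.descFactorial (n - k) = (k + 1) * n.descFactorial (n - (k+1)) := by
        have : n - k = (n - (k+1)) + 1 := by omega
        rw [this, Nat.descFactorial_succ]
        congr 1
        omega
      calc n ^ s * n.descFactorial (n - s) ≤ n ^ k * n.descFactorial (n - k) := h1
        _ = n ^ k * ((k+1) * n.descFactorial (n - (k+1))) := by rw [key]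
        _ ≤ n ^ k * (n * n.descFactorial (n - (k+1))) := by
            apply Nat.mul_le_mul_left
            exact Nat.mul_le_mul_right _ (by omega)
        _ = n ^ (k+1) * n.descFactorial (n - (k+1)) := by ring
    · subst h; rfl

lemma perS {n : ℕ} (S : Finset (Fin n)) :
    Fintype.card {f : Fin n → Fin n // Set.InjOn f ↑(Sᶜ)}
      ≤ n ^ S.card * n.descFactorial (n - S.card) := by
  classical
  have key : Fintype.card {f : Fin n → Fin n // Set.InjOn f ↑(Sᶜ)}
      ≤ Fintype.card ((↥S → Fin n) × (↥(Sᶜ) ↪ Fin n)) := by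
    apply Fintype.card_le_of_injective
      (fun g => (fun i => g.1 i, ⟨fun i => g.1 i, by
        intro a b hab
        have := g.2 (a.2 : (a : Fin n) ∈ (↑(Sᶜ) : Set (Fin n))) (b.2 : (b : Fin n) ∈ (↑(Sᶜ) : Set (Fin n))) hab
        exact Subtype.ext this⟩))
    intro g g' h
    obtain ⟨h1, h2⟩ := Prod.mk.injEq .. ▸ h
    apply Subtype.ext
    funext i
    by_cases hi : i ∈ S
    · exact congrFun h1 ⟨i, hi⟩
    · have := congrFun (congrArg (fun e => e.toFun) h2) ⟨i, by simpa using hi⟩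
      exact this
  calc Fintype.card {f : Fin n → Fin n // Set.InjOn f ↑(Sᶜ)}
      ≤ Fintype.card ((↥S → Fin n) × (↥(Sᶜ) ↪ Fin n)) := key
    _ = n ^ S.card * n.descFactorial (n - S.card) := by
        rw [Fintype.card_prod, Fintype.card_fun, Fintype.card_embedding_eq]
        simp [Finset.card_compl]

lemma countBound (n m : ℕ) (h2 : 2 * m ≤ n) :
    Nat.card {f : Fin n → Fin n // ∃ S : Finset (Fin n), S.card ≤ m ∧ Set.InjOn f ↑(Sᶜ)}
      ≤ (m + 1) * n.choose m * (n ^ m * n.descFactorial (n - m)) := by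
  classical
  rw [Nat.card_eq_fintype_card, Fintype.card_subtype]
  have hsub : (univ.filter fun f : Fin n → Fin n =>
        ∃ S : Finset (Fin n), S.card ≤ m ∧ Set.InjOn f ↑(Sᶜ))
      ⊆ (univ.filter fun S : Finset (Fin n) => S.card ≤ m).biUnion
          (fun S => univ.filter fun f : Fin n → Fin n => Set.InjOn f ↑(Sᶜ)) := by
    intro f hf
    simp only [mem_filter, mem_univ, true_and] at hf
    obtain ⟨S, hS, hinj⟩ := hf
    simp only [mem_biUnion, mem_filter, mem_univ, true_and]
    exact ⟨S, hS, hinj⟩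
  calc (univ.filter fun f : Fin n → Fin n =>
        ∃ S : Finset (Fin n), S.card ≤ m ∧ Set.InjOn f ↑(Sᶜ)).card
      ≤ ((univ.filter fun S : Finset (Fin n) => S.card ≤ m).biUnion
          (fun S => univ.filter fun f : Fin n → Fin n => Set.InjOn f ↑(Sᶜ))).card :=
        card_le_card hsub
    _ ≤ ∑ S ∈ univ.filter fun S : Finset (Fin n) => S.card ≤ m,
          (univ.filter fun f : Fin n → Fin n => Set.InjOn f ↑(Sᶜ)).card :=
        card_biUnion_le
    _ ≤ ∑ S ∈ univ.filter fun S : Finset (Fin n) => S.card ≤ m,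
          (n ^ m * n.descFactorial (n - m)) := by
        apply Finset.sum_le_sum
        intro S hS
        simp only [mem_filter, mem_univ, true_and] at hS
        calc (univ.filter fun f : Fin n → Fin n => Set.InjOn f ↑(Sᶜ)).card
            = Fintype.card {f : Fin n → Fin n // Set.InjOn f ↑(Sᶜ)} :=
              (Fintype.card_subtype _).symm
          _ ≤ n ^ S.card * n.descFactorial (n - S.card) := perS S
          _ ≤ n ^ m * n.descFactorial (n - m) := fiberMono hS (by omega)
    _ = (univ.filter fun S : Finset (Fin n) => S.card ≤ m).card
          * (n ^ m * n.descFactorial (n - m)) := by rw [Finset.sum_const, smul_eq_mul]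
    _ ≤ ((m + 1) * n.choose m) * (n ^ m * n.descFactorial (n - m)) := by
        apply Nat.mul_le_mul_right
        have hsub2 : (univ.filter fun S : Finset (Fin n) => S.card ≤ m)
            ⊆ (range (m+1)).biUnion (fun s => univ.powersetCard s) := by
          intro S hS
          simp only [mem_filter, mem_univ, true_and] at hS
          simp only [mem_biUnion, mem_range, mem_powersetCard]
          exact ⟨S.card, by omega, subset_univ S, rfl⟩
        calc (univ.filter fun S : Finset (Fin n) => S.card ≤ m).card
            ≤ ((range (m+1)).biUnion (fun s => univ.powersetCard s)).card :=
              card_le_card hsub2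
          _ ≤ ∑ s ∈ range (m+1), (univ.powersetCard s).card := card_biUnion_le
          _ ≤ ∑ _s ∈ range (m+1), n.choose m := by
              apply Finset.sum_le_sum
              intro s hs
              rw [card_powersetCard, card_univ, Fintype.card_fin]
              exact chooseMono (by simp at hs; omega) h2
          _ = (m + 1) * n.choose m := by simp [mul_comm]


open Real

lemma expAux (k : ℕ) (hk : 1 ≤ k) :
    Real.exp 1 * (k:ℝ) ^ (k+1) ≤ ((k:ℝ)+1) ^ (k+1) := by
  have hk0 : (0:ℝ) < k := by exact_mod_cast hk
  have hxe : (k:ℝ)/((k:ℝ)+1) ≤ Real.exp (-(1/((k:ℝ)+1))) := by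
    have h := Real.add_one_le_exp (-(1/((k:ℝ)+1)))
    have hx' : -(1/((k:ℝ)+1)) + 1 = (k:ℝ)/((k:ℝ)+1) := by field_simp; ring
    linarith [hx' ▸ h]
  have hpos := Real.exp_pos (1/((k:ℝ)+1))
  have h1 : Real.exp (1/((k:ℝ)+1)) ≤ ((k:ℝ)+1)/k := by
    rw [Real.exp_neg] at hxe
    rw [le_div_iff₀ hk0]
    have h2 := mul_le_mul_of_nonneg_right hxe hpos.le
    rw [inv_mul_cancel₀ (ne_of_gt hpos)] at h2
    have hk1 : (0:ℝ) < (k:ℝ)+1 := by positivity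
    field_simp at h2
    linarith [h2]
  have h2 : Real.exp 1 = (Real.exp (1/((k:ℝ)+1))) ^ (k+1) := by
    rw [← Real.exp_nat_mul]
    congr 1
    push_cast
    field_simp
  rw [h2]
  calc (Real.exp (1/((k:ℝ)+1))) ^ (k+1) * (k:ℝ)^(k+1)
      ≤ (((k:ℝ)+1)/k) ^ (k+1) * (k:ℝ)^(k+1) := by
        apply mul_le_mul_of_nonneg_right _ (by positivity)
        exact pow_le_pow_left₀ hpos.le h1 _
    _ = ((k:ℝ)+1) ^ (k+1) := by
        rw [div_pow, div_mul_eq_mul_div, mul_div_assoc, div_self (by positivity), mul_one]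

lemma factUpper (n : ℕ) (hn : 1 ≤ n) :
    (n.factorial : ℝ) * Real.exp n ≤ Real.exp 1 * (n:ℝ) ^ (n+1) := by
  induction n with
  | zero => omega
  | succ k ih =>
    rcases Nat.eq_or_lt_of_le hn with h | h
    · simp [← h]
    · have hk : 1 ≤ k := by omega
      have ihk := ih hk
      have key := expAux k hk
      have e1 := Real.exp_pos 1
      have ek := Real.exp_pos (k:ℝ)
      calc ((k+1).factorial : ℝ) * Real.exp ((k:ℕ)+1 : ℕ)
          = ((k:ℝ)+1) * ((k.factorial : ℝ) * Real.exp k) * Real.exp 1 := by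
            rw [Nat.factorial_succ]
            push_cast
            rw [Real.exp_add]
            ring
        _ ≤ ((k:ℝ)+1) * (Real.exp 1 * (k:ℝ)^(k+1)) * Real.exp 1 := by
            have hk1 : (0:ℝ) ≤ (k:ℝ)+1 := by positivity
            exact mul_le_mul_of_nonneg_right (mul_le_mul_of_nonneg_left ihk hk1) e1.le
        _ = ((k:ℝ)+1) * Real.exp 1 * (Real.exp 1 * (k:ℝ)^(k+1)) := by ring
        _ ≤ ((k:ℝ)+1) * Real.exp 1 * (((k:ℝ)+1)^(k+1)) := by
            apply mul_le_mul_of_nonneg_left key (by positivity)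
        _ = Real.exp 1 * (((k:ℕ)+1 : ℕ):ℝ) ^ ((k+1)+1) := by push_cast; ring


/-- For some `c > 0` and all sufficiently large `n`, the number of
functions `f : [n] → [n]` that agree with some permutation on more than `n - n/8`
points (i.e. differ from some permutation on fewer than `n/8` values) is at most
`e^{-c n} · n^n`; equivalently, a uniformly random function differs from every permutation
on at least `n/8` values with probability at least `1 - e^{-c n}`. -/
theorem stmt11 :
    ∃ c : ℝ, 0 < c ∧ ∃ n₀ : ℕ, ∀ n : ℕ, n₀ ≤ n →
      (Nat.card {f : Fin n → Fin n // ∃ σ : Equiv.Perm (Fin n),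
          (Nat.card {i : Fin n // f i ≠ σ i} : ℝ) < (n : ℝ) / 8} : ℝ)
        ≤ Real.exp (-c * n) * (n : ℝ) ^ n := by
  classical
  refine ⟨1/16, by norm_num, 1000, ?_⟩
  intro n hn
  set m := n / 8 with hmdef
  have h8m : 8 * m ≤ n := by omega
  have h8m7 : n ≤ 8 * m + 7 := by omega
  have hm125 : 125 ≤ m := by omega
  have h2m : 2 * m ≤ n := by omega
  have hmn : m ≤ n := by omega
  have h1n : 1 ≤ n := by omega
  have hm1nat : m + 1 ≤ n := by omega
  -- Step A : reduce to the injective-off-a-small-set count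
  have stepA : Nat.card {f : Fin n → Fin n // ∃ σ : Equiv.Perm (Fin n),
      (Nat.card {i : Fin n // f i ≠ σ i} : ℝ) < (n : ℝ) / 8}
      ≤ Nat.card {f : Fin n → Fin n // ∃ S : Finset (Fin n), S.card ≤ m ∧ Set.InjOn f ↑(Sᶜ)} := by
    have himp : ∀ f : Fin n → Fin n, (∃ σ : Equiv.Perm (Fin n),
        (Nat.card {i : Fin n // f i ≠ σ i} : ℝ) < (n : ℝ) / 8) →
        (∃ S : Finset (Fin n), S.card ≤ m ∧ Set.InjOn f ↑(Sᶜ)) := by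
      intro f ⟨σ, hσ⟩
      refine ⟨univ.filter (fun i => f i ≠ σ i), ?_, ?_⟩
      · have hcard : (univ.filter (fun i => f i ≠ σ i)).card
            = Nat.card {i : Fin n // f i ≠ σ i} := by
          rw [Nat.card_eq_fintype_card, Fintype.card_subtype]
        have h8 : 8 * Nat.card {i : Fin n // f i ≠ σ i} < n := by
          have h' : (8 * Nat.card {i : Fin n // f i ≠ σ i} : ℝ) < n := by linarith
          exact_mod_cast h'
        omega
      · intro a ha b hb hab
        simp only [coe_compl, Set.mem_compl_iff, mem_coe, mem_filter, mem_univ,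
          true_and, not_not] at ha hb
        exact σ.injective (ha ▸ hb ▸ hab)
    exact Nat.card_le_card_of_injective (fun x => ⟨x.1, himp x.1 x.2⟩)
      (fun a b hab => by simpa [Subtype.ext_iff] using hab)
  have stepB := countBound n m h2m
  -- pass to the reals
  have hcast : (Nat.card {f : Fin n → Fin n // ∃ σ : Equiv.Perm (Fin n),
      (Nat.card {i : Fin n // f i ≠ σ i} : ℝ) < (n : ℝ) / 8} : ℝ)
      ≤ ((m:ℝ) + 1) * (n.choose m : ℝ) * ((n:ℝ)^m * (n.descFactorial (n - m) : ℝ)) := by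
    have := le_trans stepA stepB
    exact_mod_cast this
  -- real-side quantities and facts
  have hR : (1000:ℝ) ≤ n := by exact_mod_cast hn
  have hM : (125:ℝ) ≤ m := by exact_mod_cast hm125
  have hRM : (n:ℝ) ≤ 9 * m := by
    have h7 : (n:ℝ) ≤ 8*(m:ℝ) + 7 := by exact_mod_cast h8m7
    linarith
  have h8MR : 8 * (m:ℝ) ≤ n := by exact_mod_cast h8m
  have hMpos : (0:ℝ) < m := by linarith
  have hRpos : (0:ℝ) < n := by linarith
  have hFpos : (0:ℝ) < (m.factorial : ℝ) := by exact_mod_cast m.factorial_pos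
  -- basic bounds
  have hchoose : (n.choose m : ℝ) ≤ (n:ℝ)^m / m.factorial := by
    rw [le_div_iff₀ hFpos]
    have h := Nat.descFactorial_le_pow n m
    rw [Nat.descFactorial_eq_factorial_mul_choose] at h
    have h' : (m.factorial * n.choose m : ℕ) ≤ ((n:ℕ)^m : ℕ) := h
    calc (n.choose m : ℝ) * m.factorial = ((m.factorial * n.choose m : ℕ) : ℝ) := by
          push_cast; ring
      _ ≤ (((n:ℕ)^m : ℕ) : ℝ) := by exact_mod_cast h'
      _ = (n:ℝ)^m := by push_cast; ring
  have hdesc : (n.descFactorial (n - m) : ℝ) = (n.factorial : ℝ) / m.factorial := by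
    rw [eq_div_iff (ne_of_gt hFpos)]
    have h := Nat.factorial_mul_descFactorial (Nat.sub_le n m)
    have hnm : n - (n - m) = m := Nat.sub_sub_self hmn
    rw [hnm] at h
    calc (n.descFactorial (n - m) : ℝ) * m.factorial
        = ((m.factorial * n.descFactorial (n - m) : ℕ) : ℝ) := by push_cast; ring
      _ = (n.factorial : ℝ) := by exact_mod_cast congrArg (Nat.cast : ℕ → ℝ) h
  have hmfact : (m:ℝ)^m ≤ (m.factorial : ℝ) * Real.exp m := by
    have h := Real.pow_div_factorial_le_exp (x := (m:ℝ)) (Nat.cast_nonneg m) m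
    rw [div_le_iff₀ hFpos] at h
    linarith [h, mul_comm (Real.exp (m:ℝ)) ((m.factorial : ℝ))]
  have hG : (n:ℝ)^m / m.factorial ≤ 9^m * Real.exp m := by
    rw [div_le_iff₀ hFpos]
    calc (n:ℝ)^m ≤ (9*(m:ℝ))^m := pow_le_pow_left₀ hRpos.le hRM m
      _ = 9^m * (m:ℝ)^m := mul_pow 9 (m:ℝ) m
      _ ≤ 9^m * ((m.factorial : ℝ) * Real.exp m) :=
          mul_le_mul_of_nonneg_left hmfact (by positivity)
      _ = 9^m * Real.exp m * m.factorial := by ring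
  -- 648^m ≤ exp(13n/16)
  have h648 : ((9:ℝ)^m * Real.exp m)^2 ≤ Real.exp (13*(n:ℝ)/16) := by
    have hexp2 : Real.exp 2 ≤ 8 := by
      have h9 := Real.exp_one_lt_d9
      calc Real.exp 2 = (Real.exp 1)^2 := by
            rw [← Real.exp_nat_mul]; norm_num
        _ ≤ 2.7182818286^2 := pow_le_pow_left₀ (Real.exp_pos 1).le h9.le 2
        _ ≤ 8 := by norm_num
    have hsq : ((9:ℝ)^m * Real.exp m)^2 ≤ (648:ℝ)^m := by
      have e1 : ((9:ℝ)^m * Real.exp m)^2 = 81^m * (Real.exp 2)^m := by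
        calc ((9:ℝ)^m * Real.exp m)^2
            = ((9:ℝ)^2)^m * Real.exp ((2:ℕ) * (m:ℝ)) := by
              rw [mul_pow, ← pow_mul, mul_comm m 2, pow_mul, Real.exp_nat_mul]
          _ = 81^m * (Real.exp 2)^m := by
              rw [show ((2:ℕ):ℝ) * (m:ℝ) = (m:ℕ) * (2:ℝ) by push_cast; ring,
                Real.exp_nat_mul]
              norm_num
      rw [e1]
      calc (81:ℝ)^m * (Real.exp 2)^m
          ≤ 81^m * (8:ℝ)^m := by
            apply mul_le_mul_of_nonneg_left
              (pow_le_pow_left₀ (Real.exp_pos 2).le hexp2 m) (by positivity)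
        _ = 648^m := by rw [← mul_pow]; norm_num
    have hh : (648:ℝ)^m ≤ Real.exp (13*(n:ℝ)/16) := by
      have h1 : (648:ℝ) ≤ Real.exp (13/2) := by
        have e6 : (403:ℝ) ≤ (Real.exp 1)^6 := by
          have h9 := Real.exp_one_gt_d9
          calc (403:ℝ) ≤ 2.7182818283^6 := by norm_num
            _ ≤ (Real.exp 1)^6 := pow_le_pow_left₀ (by norm_num) h9.le 6
        have eh : (13/8:ℝ) ≤ Real.exp (1/2) := by
          have h := Real.quadratic_le_exp_of_nonneg (x := (1/2:ℝ)) (by norm_num)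
          norm_num at h ⊢
          linarith
        calc (648:ℝ) ≤ 403 * (13/8) := by norm_num
          _ ≤ (Real.exp 1)^6 * Real.exp (1/2) :=
              mul_le_mul e6 eh (by norm_num) (by positivity)
          _ = Real.exp (13/2) := by
              rw [← Real.exp_nat_mul, ← Real.exp_add]; norm_num
      calc (648:ℝ)^m ≤ (Real.exp (13/2))^m :=
            pow_le_pow_left₀ (by norm_num) h1 m
        _ = Real.exp ((m:ℝ) * (13/2)) := by
            rw [← Real.exp_nat_mul]
        _ ≤ Real.exp (13*(n:ℝ)/16) := by
            apply Real.exp_le_exp.mpr; linarith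
    linarith
  -- factorial upper bound, in divided form
  have hfac' : (n.factorial : ℝ) ≤ Real.exp 1 * (n:ℝ)^(n+1) * Real.exp (-(n:ℝ)) := by
    have h := factUpper n h1n
    calc (n.factorial:ℝ) = (n.factorial:ℝ) * Real.exp n * Real.exp (-(n:ℝ)) := by
          rw [mul_assoc, ← Real.exp_add]; simp
      _ ≤ Real.exp 1 * (n:ℝ)^(n+1) * Real.exp (-(n:ℝ)) :=
          mul_le_mul_of_nonneg_right h (Real.exp_pos _).le
  -- polynomial factor is at most exp(n/8)
  have hpoly : ((m:ℝ)+1) * Real.exp 1 * (n:ℝ) ≤ Real.exp ((n:ℝ)/8) := by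
    have h3 : Real.exp 1 ≤ 3 := le_of_lt (lt_trans Real.exp_one_lt_d9 (by norm_num))
    have hm1 : (m:ℝ)+1 ≤ n := by exact_mod_cast hm1nat
    have hcube : ((m:ℝ)+1) * Real.exp 1 * n ≤ (n:ℝ)^3 := by
      have t1 : ((m:ℝ)+1) * Real.exp 1 ≤ (n:ℝ)*3 :=
        mul_le_mul hm1 h3 (Real.exp_pos 1).le (by positivity)
      calc ((m:ℝ)+1) * Real.exp 1 * n ≤ ((n:ℝ)*3) * n :=
            mul_le_mul_of_nonneg_right t1 hRpos.le
        _ ≤ (n:ℝ)^3 := by nlinarith [hR, sq_nonneg ((n:ℝ))]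
    have h6 := Real.pow_div_factorial_le_exp (x := (n:ℝ)/8) (by positivity) 6
    norm_num [Nat.factorial] at h6
    have h1e9 : (1000000000:ℝ) ≤ (n:ℝ)^3 := by
      calc (1000000000:ℝ) = 1000^3 := by norm_num
        _ ≤ (n:ℝ)^3 := pow_le_pow_left₀ (by norm_num) hR 3
    have hfin : (n:ℝ)^3 ≤ ((n:ℝ)/8)^6 / 720 := by
      rw [div_pow, div_div, le_div_iff₀ (by positivity)]
      have hmul : (n:ℝ)^3 * 188743680 ≤ (n:ℝ)^3 * (n:ℝ)^3 :=
        mul_le_mul_of_nonneg_left (by linarith) (by positivity)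
      calc (n:ℝ)^3 * (8^6 * 720) = (n:ℝ)^3 * 188743680 := by norm_num
        _ ≤ (n:ℝ)^3 * (n:ℝ)^3 := hmul
        _ = (n:ℝ)^6 := by ring
    linarith
  have main : ((m:ℝ) + 1) * (n.choose m : ℝ) * ((n:ℝ)^m * (n.descFactorial (n - m) : ℝ))
      ≤ Real.exp (-(1/16) * (n:ℝ)) * (n:ℝ)^n := by
    calc ((m:ℝ)+1) * (n.choose m : ℝ) * ((n:ℝ)^m * (n.descFactorial (n - m) : ℝ))
        = ((m:ℝ)+1) * ((n.choose m : ℝ) * ((n:ℝ)^m * ((n.factorial:ℝ)/m.factorial))) := by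
          rw [hdesc]; ring
      _ ≤ ((m:ℝ)+1) * (((n:ℝ)^m/m.factorial) * ((n:ℝ)^m * ((n.factorial:ℝ)/m.factorial))) := by
          apply mul_le_mul_of_nonneg_left _ (by positivity)
          apply mul_le_mul_of_nonneg_right hchoose (by positivity)
      _ = ((m:ℝ)+1) * (n.factorial:ℝ) * ((n:ℝ)^m/m.factorial)^2 := by ring
      _ ≤ ((m:ℝ)+1) * (n.factorial:ℝ) * ((9:ℝ)^m * Real.exp m)^2 := by
          apply mul_le_mul_of_nonneg_left _ (by positivity)
          exact pow_le_pow_left₀ (by positivity) hG 2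
      _ ≤ ((m:ℝ)+1) * (n.factorial:ℝ) * Real.exp (13*(n:ℝ)/16) :=
          mul_le_mul_of_nonneg_left h648 (by positivity)
      _ ≤ ((m:ℝ)+1) * (Real.exp 1 * (n:ℝ)^(n+1) * Real.exp (-(n:ℝ))) * Real.exp (13*(n:ℝ)/16) := by
          apply mul_le_mul_of_nonneg_right _ (Real.exp_pos _).le
          exact mul_le_mul_of_nonneg_left hfac' (by positivity)
      _ = (((m:ℝ)+1) * Real.exp 1 * (n:ℝ)) *
            ((n:ℝ)^n * (Real.exp (-(n:ℝ)) * Real.exp (13*(n:ℝ)/16))) := by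
          rw [pow_succ]; ring
      _ ≤ Real.exp ((n:ℝ)/8) *
            ((n:ℝ)^n * (Real.exp (-(n:ℝ)) * Real.exp (13*(n:ℝ)/16))) := by
          apply mul_le_mul_of_nonneg_right hpoly (by positivity)
      _ = (n:ℝ)^n * (Real.exp ((n:ℝ)/8) * (Real.exp (-(n:ℝ)) * Real.exp (13*(n:ℝ)/16))) := by
          ring
      _ = Real.exp (-(1/16) * (n:ℝ)) * (n:ℝ)^n := by
          rw [← Real.exp_add, ← Real.exp_add, mul_comm]
          congr 1
          ring
  linarith [hcast, main]
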